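/- There exists an h-uniform hypergraph on n vertices with m hyperedges, all hyperedges pairwise distinct, in which every vertex has degree v, if and only if mh = nv, h ≤ n, v ≤ m, and v ≤ (h/n)·C(n,h). -/

import Mathlib

open Finset

private def hdeg {n : ℕ} (S : Finset (Finset (Fin n))) (x : Fin n) : ℕ :=
  (S.filter (fun A => x ∈ A)).card

private lemma sum_hdeg {n : ℕ} (S : Finset (Finset (Fin n))) :
    ∑ x : Fin n, hdeg S x = ∑ A ∈ S, A.card := by
  unfold hdeg
  simp only [card_filter]
  rw [Finset.sum_comm]
  refine Finset.sum_congr rfl fun A _ => ?_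
  rw [Finset.sum_boole]
  simp [Finset.filter_mem_eq_inter]

-- swap existence
private lemma swap_exists {n : ℕ} (S : Finset (Finset (Fin n))) {a b : Fin n}
    (hab : a ≠ b) (hd : hdeg S b < hdeg S a) :
    ∃ A ∈ S, a ∈ A ∧ b ∉ A ∧ insert b (A.erase a) ∉ S := by
  by_contra hcon
  push_neg at hcon
  set P := S.filter (fun A => a ∈ A ∧ b ∉ A) with hP
  set Q := S.filter (fun A => b ∈ A ∧ a ∉ A) with hQ
  have hPQ : P.card ≤ Q.card := by
    apply Finset.card_le_card_of_injOn (fun A => insert b (A.erase a))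
    · intro A hA
      simp only [hP, Finset.mem_coe, mem_filter] at hA
      obtain ⟨hAS, haA, hbA⟩ := hA
      have hmem : insert b (A.erase a) ∈ S := hcon A hAS haA hbA
      simp only [hQ, Finset.mem_coe, mem_filter]
      refine ⟨hmem, mem_insert_self _ _, ?_⟩
      simp only [Finset.mem_insert, Finset.mem_erase, not_or]
      exact ⟨hab, fun h => h.1 rfl⟩
    · intro A hA A' hA' heq
      simp only [hP, coe_filter, Set.mem_setOf_eq] at hA hA'
      have h1 : (insert b (A.erase a)).erase b = A.erase a :=
        Finset.erase_insert (by simp [hA.2.2])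
      have h2 : (insert b (A'.erase a)).erase b = A'.erase a :=
        Finset.erase_insert (by simp [hA'.2.2])
      have : A.erase a = A'.erase a := by
        rw [← h1, ← h2]; exact congrArg (fun t => Finset.erase t b) heq
      have := congrArg (insert a) this
      rwa [Finset.insert_erase hA.2.1, Finset.insert_erase hA'.2.1] at this
  -- degree count
  have hda : hdeg S a = (S.filter (fun A => a ∈ A ∧ b ∈ A)).card + P.card := by
    unfold hdeg
    rw [← Finset.card_filter_add_card_filter_not (s := S.filter (fun A => a ∈ A))
      (fun A => b ∈ A), Finset.filter_filter, Finset.filter_filter]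
  have hdb : hdeg S b = (S.filter (fun A => a ∈ A ∧ b ∈ A)).card + Q.card := by
    unfold hdeg
    rw [← Finset.card_filter_add_card_filter_not (s := S.filter (fun A => b ∈ A))
      (fun A => a ∈ A), Finset.filter_filter, Finset.filter_filter]
    have e1 : (S.filter fun A => b ∈ A ∧ a ∈ A) = (S.filter fun A => a ∈ A ∧ b ∈ A) := by
      apply Finset.filter_congr; tauto
    have e2 : (S.filter fun A => b ∈ A ∧ ¬ a ∈ A) = Q := by
      simp [hQ]
    rw [e1, e2]
  omega

private def Phi {n : ℕ} (v : ℕ) (S : Finset (Finset (Fin n))) : ℤ :=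
  ∑ x : Fin n, ((hdeg S x : ℤ) - v) ^ 2

private lemma Phi_nonneg {n : ℕ} (v : ℕ) (S : Finset (Finset (Fin n))) : 0 ≤ Phi v S :=
  Finset.sum_nonneg fun _ _ => sq_nonneg _

-- degree after swap
private lemma hdeg_swap {n : ℕ} {S : Finset (Finset (Fin n))} {A A' : Finset (Fin n)}
    (hA : A ∈ S) (hA' : A' ∉ S) (x : Fin n) :
    hdeg (insert A' (S.erase A)) x + (if x ∈ A then 1 else 0)
      = hdeg S x + (if x ∈ A' then 1 else 0) := by
  unfold hdeg
  rw [Finset.filter_insert]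
  have hAnotin : A' ∉ Finset.filter (fun B => x ∈ B) (S.erase A) := by
    intro hc
    exact hA' (Finset.mem_of_mem_erase (Finset.mem_filter.mp hc).1)
  have hcard : (Finset.filter (fun B => x ∈ B) (S.erase A)).card + (if x ∈ A then 1 else 0)
      = (Finset.filter (fun B => x ∈ B) S).card := by
    rw [Finset.filter_erase]
    by_cases hx : x ∈ A
    · have hAf : A ∈ Finset.filter (fun B => x ∈ B) S := Finset.mem_filter.mpr ⟨hA, hx⟩
      rw [Finset.card_erase_of_mem hAf]
      have : 0 < (Finset.filter (fun B => x ∈ B) S).card := Finset.card_pos.mpr ⟨A, hAf⟩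
      simp [hx]
      omega
    · have : A ∉ Finset.filter (fun B => x ∈ B) S := by simp [hx]
      rw [Finset.erase_eq_of_notMem this]
      simp [hx]
  by_cases hx' : x ∈ A'
  · rw [if_pos hx', Finset.card_insert_of_notMem hAnotin]
    simp [hx']
    omega
  · rw [if_neg hx', if_neg hx']
    simpa using hcard

private lemma step_lemma {n h m v : ℕ} (S : Finset (Finset (Fin n)))
    (hcard : S.card = m) (hunif : ∀ A ∈ S, A.card = h)
    (hsum : ∑ x : Fin n, hdeg S x = n * v)
    (hbad : ∃ x : Fin n, hdeg S x ≠ v) :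
    ∃ S' : Finset (Finset (Fin n)), S'.card = m ∧ (∀ A ∈ S', A.card = h) ∧
      (∑ x : Fin n, hdeg S' x = n * v) ∧ Phi v S' < Phi v S := by
  obtain ⟨x0, hx0⟩ := hbad
  -- find a with hdeg > v and b with hdeg < v
  have hex : (∃ a, v < hdeg S a) ∧ (∃ b, hdeg S b < v) := by
    constructor
    · by_contra hc
      push_neg at hc
      have hlt : hdeg S x0 < v := lt_of_le_of_ne (hc x0) hx0
      have : ∑ x : Fin n, hdeg S x < ∑ _x : Fin n, v :=
        Finset.sum_lt_sum (fun i _ => hc i) ⟨x0, Finset.mem_univ _, hlt⟩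
      simp [Finset.sum_const, Finset.card_univ, mul_comm] at this
      omega
    · by_contra hc
      push_neg at hc
      have hlt : v < hdeg S x0 := lt_of_le_of_ne (hc x0) (Ne.symm hx0)
      have : ∑ _x : Fin n, v < ∑ x : Fin n, hdeg S x :=
        Finset.sum_lt_sum (fun i _ => hc i) ⟨x0, Finset.mem_univ _, hlt⟩
      simp [Finset.sum_const, Finset.card_univ, mul_comm] at this
      omega
  obtain ⟨⟨a, ha⟩, ⟨b, hb⟩⟩ := hex
  have hab : a ≠ b := by rintro rfl; omega
  obtain ⟨A, hAS, haA, hbA, hA'S⟩ := swap_exists S hab (by omega)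
  set A' := insert b (A.erase a) with hA'def
  have hAA' : A' ≠ A := fun hcontra => hbA (hcontra ▸ mem_insert_self b _)
  refine ⟨insert A' (S.erase A), ?_, ?_, ?_, ?_⟩
  · rw [Finset.card_insert_of_notMem (fun hc => hA'S (Finset.mem_of_mem_erase hc)),
      Finset.card_erase_of_mem hAS, hcard]
    have : 0 < m := hcard ▸ Finset.card_pos.mpr ⟨A, hAS⟩
    omega
  · intro B hB
    rcases Finset.mem_insert.mp hB with rfl | hB'
    · rw [hA'def, Finset.card_insert_of_notMem (fun hc => hbA (Finset.mem_of_mem_erase hc)),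
        Finset.card_erase_of_mem haA, hunif A hAS]
      have : 0 < h := (hunif A hAS) ▸ Finset.card_pos.mpr ⟨a, haA⟩
      omega
    · exact hunif B (Finset.mem_of_mem_erase hB')
  · -- sum of degrees preserved
    have key := fun x => hdeg_swap hAS hA'S (A' := A') x
    have h1 : ∑ x : Fin n, (hdeg (insert A' (S.erase A)) x + if x ∈ A then 1 else 0)
        = ∑ x : Fin n, (hdeg S x + if x ∈ A' then 1 else 0) :=
      Finset.sum_congr rfl fun x _ => key x
    rw [Finset.sum_add_distrib, Finset.sum_add_distrib] at h1
    have cA : (∑ x : Fin n, if x ∈ A then 1 else 0) = A.card := by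
      rw [Finset.sum_boole]; simp [Finset.filter_mem_eq_inter]
    have cA' : (∑ x : Fin n, if x ∈ A' then 1 else 0) = A'.card := by
      rw [Finset.sum_boole]; simp [Finset.filter_mem_eq_inter]
    have cardA' : A'.card = A.card := by
      rw [hA'def, Finset.card_insert_of_notMem (fun hc => hbA (Finset.mem_of_mem_erase hc)),
        Finset.card_erase_of_mem haA]
      have : 0 < A.card := Finset.card_pos.mpr ⟨a, haA⟩
      omega
    rw [cA, cA', cardA'] at h1
    omega
  · -- Phi decreases
    set T := insert A' (S.erase A) with hT
    have hda : hdeg T a + 1 = hdeg S a := by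
      have := hdeg_swap hAS hA'S (A' := A') a
      have haA' : a ∉ A' := by
        rw [hA'def]
        simp only [Finset.mem_insert, Finset.mem_erase, not_or]
        exact ⟨hab, fun hc => hc.1 rfl⟩
      simpa [haA, haA'] using this
    have hdb : hdeg T b = hdeg S b + 1 := by
      have := hdeg_swap hAS hA'S (A' := A') b
      have hbA' : b ∈ A' := mem_insert_self _ _
      simpa [hbA, hbA'] using this
    have hother : ∀ x : Fin n, x ≠ a → x ≠ b → hdeg T x = hdeg S x := by
      intro x hxa hxb
      have := hdeg_swap hAS hA'S (A' := A') x
      have : (x ∈ A') ↔ (x ∈ A) := by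
        rw [hA'def]
        simp [Finset.mem_insert, Finset.mem_erase, hxb, hxa]
      by_cases hx : x ∈ A
      · have hx' : x ∈ A' := this.mpr hx
        have h2 := hdeg_swap hAS hA'S (A' := A') x
        simpa [hx, hx'] using h2
      · have hx' : x ∉ A' := fun hc => hx (this.mp hc)
        have h2 := hdeg_swap hAS hA'S (A' := A') x
        simpa [hx, hx'] using h2
    -- now compare sums
    unfold Phi
    have hbma : b ∈ (Finset.univ : Finset (Fin n)).erase a :=
      Finset.mem_erase.mpr ⟨Ne.symm hab, Finset.mem_univ _⟩
    have split : ∀ f : Fin n → ℤ, ∑ x : Fin n, f x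
        = (∑ x ∈ ((Finset.univ : Finset (Fin n)).erase a).erase b, f x) + f b + f a := by
      intro f
      rw [Finset.sum_erase_add _ _ hbma, Finset.sum_erase_add _ _ (Finset.mem_univ a)]
    rw [split (fun x => ((hdeg T x : ℤ) - v) ^ 2), split (fun x => ((hdeg S x : ℤ) - v) ^ 2)]
    have heqsum : (∑ x ∈ ((Finset.univ : Finset (Fin n)).erase a).erase b,
        ((hdeg T x : ℤ) - v) ^ 2)
        = ∑ x ∈ ((Finset.univ : Finset (Fin n)).erase a).erase b, ((hdeg S x : ℤ) - v) ^ 2 := by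
      refine Finset.sum_congr rfl fun x hx => ?_
      have h1 := Finset.mem_erase.mp hx
      have h2 := Finset.mem_erase.mp h1.2
      rw [hother x h2.1 h1.1]
    rw [heqsum]
    have e1 : (hdeg T a : ℤ) = (hdeg S a : ℤ) - 1 := by
      have := hda; push_cast [← this]; ring
    have e2 : (hdeg T b : ℤ) = (hdeg S b : ℤ) + 1 := by rw [hdb]; push_cast; ring
    rw [e1, e2]
    have hva : (v : ℤ) + 1 ≤ (hdeg S a : ℤ) := by exact_mod_cast ha
    have hvb : (hdeg S b : ℤ) + 1 ≤ (v : ℤ) := by exact_mod_cast hb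
    nlinarith [sq_nonneg ((hdeg S a : ℤ) - v), sq_nonneg ((hdeg S b : ℤ) - v)]

private lemma exists_regular (n h m v : ℕ) (hh : 0 < h)
    (hmh : m * h = n * v) (hhn : h ≤ n) (hnv : n * v ≤ h * Nat.choose n h) :
    ∃ S : Finset (Finset (Fin n)), S.card = m ∧ (∀ A ∈ S, A.card = h) ∧
      ∀ x : Fin n, hdeg S x = v := by
  have hmc : m ≤ Nat.choose n h := by
    have : m * h ≤ Nat.choose n h * h := by rw [hmh, mul_comm (Nat.choose n h) h]; exact hnv
    exact Nat.le_of_mul_le_mul_right this hh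
  -- initial family
  obtain ⟨S0, hS0sub, hS0card⟩ :=
    Finset.exists_subset_card_eq (s := Finset.powersetCard h (Finset.univ : Finset (Fin n))) (n := m)
      (by rwa [Finset.card_powersetCard, Finset.card_univ, Fintype.card_fin])
  have hS0unif : ∀ A ∈ S0, A.card = h := fun A hA =>
    (Finset.mem_powersetCard.mp (hS0sub hA)).2
  -- sum of degrees
  have hsum : ∀ S : Finset (Finset (Fin n)), S.card = m → (∀ A ∈ S, A.card = h) →
      ∑ x : Fin n, hdeg S x = n * v := by
    intro S hSc hSu
    rw [sum_hdeg]
    rw [Finset.sum_congr rfl hSu, Finset.sum_const, hSc, smul_eq_mul, hmh]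
  -- strong induction on Phi
  have main : ∀ k : ℕ, ∀ S : Finset (Finset (Fin n)), (Phi v S).toNat = k →
      S.card = m → (∀ A ∈ S, A.card = h) →
      ∃ S' : Finset (Finset (Fin n)), S'.card = m ∧ (∀ A ∈ S', A.card = h) ∧
        ∀ x : Fin n, hdeg S' x = v := by
    intro k
    induction k using Nat.strong_induction_on with
    | _ k ih =>
      intro S hk hSc hSu
      by_cases hreg : ∀ x : Fin n, hdeg S x = v
      · exact ⟨S, hSc, hSu, hreg⟩
      · push_neg at hreg
        obtain ⟨S', hS'c, hS'u, hS'sum, hS'phi⟩ :=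
          step_lemma S hSc hSu (hsum S hSc hSu) hreg
        have hlt : (Phi v S').toNat < k := by
          rw [← hk]
          have h0 := Phi_nonneg v S'
          omega
        exact ih _ hlt S' rfl hS'c hS'u
  exact main (Phi v S0).toNat S0 rfl hS0card hS0unif

/-- Characterization of `h`-uniform `v`-regular simple hypergraphs on `n` vertices with
`m` hyperedges. -/
theorem regular_hypergraph_iff (n h m v : ℕ) (hn : 0 < n) (hh : 0 < h) (hm : 0 < m)
    (hv : 0 < v) :
    (∃ E : Fin m → Finset (Fin n), Function.Injective E ∧
      (∀ i, (E i).card = h) ∧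
      (∀ x : Fin n, (Finset.univ.filter (fun i => x ∈ E i)).card = v)) ↔
    (m * h = n * v ∧ h ≤ n ∧ v ≤ m ∧ n * v ≤ h * Nat.choose n h) := by
  constructor
  · rintro ⟨E, hinj, hcard, hdeg⟩
    -- double counting
    have hdc : m * h = n * v := by
      have key : ∑ i : Fin m, (E i).card
          = ∑ x : Fin n, (Finset.univ.filter (fun i => x ∈ E i)).card := by
        simp only [card_filter]
        rw [Finset.sum_comm]
        refine Finset.sum_congr rfl fun i _ => ?_
        rw [Finset.sum_boole]
        simp [Finset.filter_mem_eq_inter]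
      rw [Finset.sum_congr rfl (fun i _ => hcard i),
        Finset.sum_congr rfl (fun x _ => hdeg x)] at key
      simpa [Finset.sum_const, Finset.card_univ, mul_comm] using key
    have hhn : h ≤ n := by
      have := Finset.card_le_card (Finset.subset_univ (E ⟨0, hm⟩))
      rwa [hcard, Finset.card_univ, Fintype.card_fin] at this
    have hvm : v ≤ m := by
      have := Finset.card_le_card
        (Finset.filter_subset (fun i => (⟨0, hn⟩ : Fin n) ∈ E i) Finset.univ)
      rwa [hdeg, Finset.card_univ, Fintype.card_fin] at this
    have hmc : m ≤ Nat.choose n h := by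
      have himg : (Finset.univ.image E) ⊆
          Finset.powersetCard h (Finset.univ : Finset (Fin n)) := by
        intro A hA
        obtain ⟨i, -, rfl⟩ := Finset.mem_image.mp hA
        exact Finset.mem_powersetCard.mpr ⟨Finset.subset_univ _, hcard i⟩
      have := Finset.card_le_card himg
      rwa [Finset.card_image_of_injective _ hinj, Finset.card_univ, Fintype.card_fin,
        Finset.card_powersetCard, Finset.card_univ, Fintype.card_fin] at this
    refine ⟨hdc, hhn, hvm, ?_⟩
    calc n * v = m * h := hdc.symm
      _ ≤ Nat.choose n h * h := Nat.mul_le_mul_right h hmc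
      _ = h * Nat.choose n h := mul_comm _ _
  · rintro ⟨hmh, hhn, hvm, hnv⟩
    obtain ⟨S, hScard, hSunif, hSreg⟩ := exists_regular n h m v hh hmh hhn hnv
    let e : {A // A ∈ S} ≃ Fin m := Finset.equivFinOfCardEq hScard
    refine ⟨fun i => (e.symm i : Finset (Fin n)), ?_, ?_, ?_⟩
    · intro i j hij
      have : e.symm i = e.symm j := Subtype.ext hij
      exact e.symm.injective this
    · intro i
      exact hSunif _ (e.symm i).2
    · intro x
      rw [← hSreg x]
      unfold hdeg
      exact Finset.card_bij (fun i _ => (e.symm i : Finset (Fin n)))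
        (fun i hi => by
          simp only [Finset.mem_filter, Finset.mem_univ, true_and] at hi ⊢
          exact ⟨(e.symm i).2, hi⟩)
        (fun i _ j _ hij => e.symm.injective (Subtype.ext hij))
        (fun A hA => by
          obtain ⟨hAS, hxA⟩ := Finset.mem_filter.mp hA
          refine ⟨e ⟨A, hAS⟩, ?_, ?_⟩
          · simp only [Finset.mem_filter, Finset.mem_univ, true_and]
            rw [Equiv.symm_apply_apply]
            exact hxA
          · show ((e.symm (e ⟨A, hAS⟩) : {B // B ∈ S}) : Finset (Fin n)) = A
            rw [Equiv.symm_apply_apply])
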